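/- Let H be an (s,t-1)-linear hypergraph on vertex set V with |V| = m, fix integers v and k with 1 ≤ v < s ≤ k ≤ m, fix a v-subset X of V, let α be the unique integer with 0 ≤ α < binom(k-v,s-v) and α ≡ (t-1)·binom(m-v,s-v) (mod binom(k-v,s-v)), and let c = ((t-1)·binom(m-v,s-v) - α)/binom(k-v,s-v). Define τ(X) to be the sum over all edges E containing X with |E| < k of (binom(k-v,s-v) - binom(|E|-v,s-v)). Then the degree of X (number of edges containing X) satisfies deg_H(X) ≤ c + τ(X)/(binom(k-v,s-v) - α). -/

import Mathlib

/-- Number of `s`-subsets `S` with `X ⊆ S ⊆ e` equals `C(|e|-v, s-v)`. -/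
lemma count_between {n : ℕ} (s v : ℕ) (hvs : v ≤ s) (X e : Finset (Fin n))
    (hXe : X ⊆ e) (hXv : X.card = v) :
    ((Finset.univ.powersetCard s).filter (fun S => X ⊆ S ∧ S ⊆ e)).card
      = Nat.choose (e.card - v) (s - v) := by
  have key : ((Finset.univ.powersetCard s).filter (fun S => X ⊆ S ∧ S ⊆ e)).card
      = ((e \ X).powersetCard (s - v)).card := by
    apply Finset.card_nbij' (fun S => S \ X) (fun A => A ∪ X)
    · intro S hS
      simp only [Finset.mem_coe, Finset.mem_filter, Finset.mem_powersetCard] at hS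
      obtain ⟨⟨_, hcard⟩, hXS, hSe⟩ := hS
      rw [Finset.mem_coe, Finset.mem_powersetCard]
      constructor
      · intro a ha
        simp only [Finset.mem_sdiff] at ha ⊢
        exact ⟨hSe ha.1, ha.2⟩
      · rw [Finset.card_sdiff_of_subset hXS, hcard, hXv]
    · intro A hA
      rw [Finset.mem_coe, Finset.mem_powersetCard] at hA
      obtain ⟨hAe, hAcard⟩ := hA
      have hdisj : Disjoint A X := by
        refine Finset.disjoint_left.2 fun a ha hax => ?_
        exact (Finset.mem_sdiff.1 (hAe ha)).2 hax
      simp only [Finset.mem_coe, Finset.mem_filter, Finset.mem_powersetCard]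
      refine ⟨⟨Finset.subset_univ _, ?_⟩, Finset.subset_union_right, ?_⟩
      · rw [Finset.card_union_of_disjoint hdisj, hAcard, hXv]
        omega
      · refine Finset.union_subset (fun a ha => (Finset.mem_sdiff.1 (hAe ha)).1) hXe
    · intro S hS
      simp only [Finset.mem_coe, Finset.mem_filter, Finset.mem_powersetCard] at hS
      exact Finset.sdiff_union_of_subset hS.2.1
    · intro A hA
      rw [Finset.mem_coe, Finset.mem_powersetCard] at hA
      have hdisj : Disjoint A X := by
        refine Finset.disjoint_left.2 fun a ha hax => ?_
        exact (Finset.mem_sdiff.1 (hA.1 ha)).2 hax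
      exact Finset.union_sdiff_cancel_right hdisj
  rw [key, Finset.card_powersetCard, Finset.card_sdiff_of_subset hXe, hXv]

lemma sum_map_finsum {α β : Type*} (M : Multiset α) (T : Finset β) (f : β → α → ℕ) :
    (M.map (fun e => ∑ S ∈ T, f S e)).sum = ∑ S ∈ T, (M.map (f S)).sum := by
  induction M using Multiset.induction_on with
  | empty => simp
  | cons a M ih => simp [ih, Finset.sum_add_distrib]

lemma sum_map_ite_one {α : Type*} (M : Multiset α) (p : α → Prop) [DecidablePred p] :
    (M.map (fun e => if p e then 1 else 0)).sum = M.countP p := by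
  induction M using Multiset.induction_on with
  | empty => simp
  | cons a M ih =>
    by_cases h : p a <;> simp [Multiset.countP_cons, h, ih, add_comm]

lemma sum_map_ite_zero {α : Type*} (M : Multiset α) (p : α → Prop) [DecidablePred p]
    (f : α → ℕ) :
    (M.map (fun e => if p e then f e else 0)).sum = ((M.filter p).map f).sum := by
  induction M using Multiset.induction_on with
  | empty => simp
  | cons a M ih =>
    by_cases h : p a <;> simp [Multiset.filter_cons, h, ih]

/-- Degree bound for a fixed `v`-subset `X` in an `(s,t-1)`-linear hypergraph:
`deg(X) ≤ c + τ(X)/(C(k-v,s-v) - α)`, where `τ(X)` is the total `(k,s,v)`-deficiency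
of edges containing `X`, `α` is the residue of `(t-1)·C(m-v,s-v)` modulo `C(k-v,s-v)`
and `c = ((t-1)·C(m-v,s-v) - α)/C(k-v,s-v)`. -/
theorem stmt_2 (m s t v k : ℕ) (hs : 2 ≤ s) (ht : 2 ≤ t)
    (hv : 1 ≤ v) (hvs : v < s) (hsk : s ≤ k) (hkm : k ≤ m)
    (E : Multiset (Finset (Fin m)))
    (hsize : ∀ e ∈ E, s - 1 ≤ e.card)
    (hlin : ∀ S : Finset (Fin m), S.card = s →
      Multiset.countP (fun e => S ⊆ e) E ≤ t - 1)
    (X : Finset (Fin m)) (hX : X.card = v)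
    (α c : ℕ) (hα : α < Nat.choose (k - v) (s - v))
    (hc : (t - 1) * Nat.choose (m - v) (s - v) = c * Nat.choose (k - v) (s - v) + α) :
    (Multiset.countP (fun e => X ⊆ e) E : ℝ) ≤
      c + (((E.filter (fun e => X ⊆ e ∧ e.card < k)).map
              (fun e => Nat.choose (k - v) (s - v) - Nat.choose (e.card - v) (s - v))).sum : ℝ) /
            ((Nat.choose (k - v) (s - v) : ℝ) - α) := by
  classical
  set D := Nat.choose (k - v) (s - v) with hD
  set M := E.filter (fun e => X ⊆ e) with hM
  set g : Finset (Fin m) → ℕ := fun e => Nat.choose (e.card - v) (s - v) with hg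
  set τ := ((E.filter (fun e => X ⊆ e ∧ e.card < k)).map (fun e => D - g e)).sum with hτ
  set d := Multiset.countP (fun e => X ⊆ e) E with hd
  -- the set of s-subsets containing X
  set T := (Finset.univ.powersetCard s).filter
      (fun S => X ⊆ S ∧ S ⊆ (Finset.univ : Finset (Fin m))) with hT
  have hTcard : T.card = Nat.choose (m - v) (s - v) := by
    rw [hT, count_between s v hvs.le X Finset.univ (Finset.subset_univ _) hX,
      Finset.card_univ, Fintype.card_fin]
  -- per-edge count
  have hedge : ∀ e ∈ M, g e = ∑ S ∈ T, (if S ⊆ e then 1 else 0) := by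
    intro e he
    have hXe : X ⊆ e := (Multiset.mem_filter.1 he).2
    have : g e = ((Finset.univ.powersetCard s).filter (fun S => X ⊆ S ∧ S ⊆ e)).card := by
      rw [hg, count_between s v hvs.le X e hXe hX]
    rw [this, ← Finset.sum_filter]
    simp only [Finset.sum_const, smul_eq_mul, mul_one]
    congr 1
    rw [hT, Finset.filter_filter]
    apply Finset.filter_congr
    intro S hS
    simp only [Finset.subset_univ, and_true, true_and]
  -- double counting: sum of g over M ≤ (t-1) * C(m-v, s-v)
  have hdouble : (M.map g).sum ≤ (t - 1) * Nat.choose (m - v) (s - v) := by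
    have h1 : (M.map g).sum = ∑ S ∈ T, (M.map (fun e => if S ⊆ e then 1 else 0)).sum := by
      rw [← sum_map_finsum M T (fun S e => if S ⊆ e then 1 else 0)]
      exact congrArg Multiset.sum (Multiset.map_congr rfl hedge)
    rw [h1]
    calc ∑ S ∈ T, (M.map (fun e => if S ⊆ e then 1 else 0)).sum
        = ∑ S ∈ T, M.countP (fun e => S ⊆ e) := by
          refine Finset.sum_congr rfl fun S _ => sum_map_ite_one M _
      _ ≤ ∑ S ∈ T, (t - 1) := by
          refine Finset.sum_le_sum fun S hS => ?_
          have hScard : S.card = s := by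
            rw [hT] at hS
            simp only [Finset.mem_filter, Finset.mem_powersetCard] at hS
            exact hS.1.2
          calc M.countP (fun e => S ⊆ e)
              ≤ E.countP (fun e => S ⊆ e) := by
                rw [hM]
                exact Multiset.countP_le_of_le _ (Multiset.filter_le _ E)
            _ ≤ t - 1 := hlin S hScard
      _ = T.card * (t - 1) := by rw [Finset.sum_const, smul_eq_mul]
      _ = (t - 1) * Nat.choose (m - v) (s - v) := by rw [hTcard, mul_comm]
  -- lower bound: d * D ≤ sum of g over M + τ
  have hlb : d * D ≤ (M.map g).sum + τ := by
    have hdcard : d = Multiset.card M := by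
      rw [hd, hM, Multiset.countP_eq_card_filter]
    have hτ' : τ = (M.map (fun e => if e.card < k then D - g e else 0)).sum := by
      rw [hτ, sum_map_ite_zero M (fun e => e.card < k) (fun e => D - g e), hM,
        Multiset.filter_filter]
      congr 1
      congr 1
      exact Multiset.filter_congr fun e _ => by tauto
    have hsum : (M.map g).sum + τ = (M.map (fun e => g e + if e.card < k then D - g e else 0)).sum := by
      rw [hτ']
      rw [← Multiset.sum_map_add]
    rw [hsum]
    have : d * D = (M.map (fun _ => D)).sum := by
      rw [Multiset.map_const', Multiset.sum_replicate, smul_eq_mul, hdcard, mul_comm]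
    rw [this]
    apply Multiset.sum_map_le_sum_map
    intro e he
    by_cases hek : e.card < k
    · simp only [hek, if_true]
      omega
    · simp only [hek, if_false, add_zero]
      rw [hD, hg]
      exact Nat.choose_le_choose _ (by omega)
  -- combine: d * D ≤ c * D + α + τ
  have hkey : d * D ≤ c * D + α + τ := by
    calc d * D ≤ (M.map g).sum + τ := hlb
      _ ≤ (t - 1) * Nat.choose (m - v) (s - v) + τ := by omega
      _ = c * D + α + τ := by rw [hc]
  -- real arithmetic
  have hDα : (0 : ℝ) < (D : ℝ) - α := by
    have : (α : ℝ) < D := by exact_mod_cast hα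
    linarith
  have hτnn : (0 : ℝ) ≤ (τ : ℝ) := Nat.cast_nonneg _
  by_cases hdc : d ≤ c
  · have : (d : ℝ) ≤ c := by exact_mod_cast hdc
    have := div_nonneg hτnn hDα.le
    linarith
  · push_neg at hdc
    have h1 : (c : ℝ) + 1 ≤ d := by exact_mod_cast hdc
    have h2 : (d : ℝ) * D ≤ c * D + α + τ := by exact_mod_cast hkey
    have hα0 : (0 : ℝ) ≤ α := Nat.cast_nonneg _
    have hprod : (0 : ℝ) ≤ (α : ℝ) * ((d : ℝ) - c - 1) := mul_nonneg hα0 (by linarith)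
    have h3 : ((d : ℝ) - c) * ((D : ℝ) - α) ≤ τ := by nlinarith
    have h4 : (d : ℝ) - c ≤ (τ : ℝ) / ((D : ℝ) - α) := by
      rw [le_div_iff₀ hDα]; exact h3
    linarith
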